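/- Let G be a quasi-finite moment graph and M a sheaf on G generated by global sections. Then the following are equivalent: (1) for every open (downwardly closed) subgraph I the restriction M(G) → M(I) is surjective; (2) for every vertex x the restriction M({≤x}) → M({<x}) is surjective; (3) for every vertex x the map M^x → M^{δx} given by the sum of the maps ρ_{x,E} over edges E ending at x is surjective, where M^{δx} is the image of M({<x}) in ⊕_{E ∈ E_{δx}} M^E. -/

import Mathlib

open scoped TensorProduct

/-- `(S, ι)` is a symmetric algebra of the `k`-vector space `V`. -/
structure IsSymmAlg (k V S : Type) [Field k] [AddCommGroup V] [Module k V]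
    [CommRing S] [Algebra k S] (ι : V →ₗ[k] S) : Prop where
  univ : ∀ (A : Type) [CommRing A] [Algebra k A] (φ : V →ₗ[k] A),
    ∃! ψ : S →ₐ[k] A, ∀ v, ψ (ι v) = φ v

/-- A moment graph over the `k`-vector space `V`: a graph with a partial order on
vertices such that linked vertices are comparable (each edge is recorded with
`src ≤ tgt`), and a labelling of edges by (generators of) one-dimensional
subspaces of `V`. -/
structure MomentGraph (k V : Type) [Field k] [AddCommGroup V] [Module k V] where
  Vertex : Type
  Edge : Type
  src : Edge → Vertex
  tgt : Edge → Vertex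
  le : Vertex → Vertex → Prop
  le_refl : ∀ x, le x x
  le_trans : ∀ x y z, le x y → le y z → le x z
  le_antisymm : ∀ x y, le x y → le y x → x = y
  src_le_tgt : ∀ e, le (src e) (tgt e)
  src_ne_tgt : ∀ e, src e ≠ tgt e
  label : Edge → V
  label_ne : ∀ e, label e ≠ 0

variable {k V : Type} [Field k] [AddCommGroup V] [Module k V]

/-- The space of sections over a subgraph `I` of the structure sheaf of `G`, with
entries in a commutative ring `A` receiving the labels via `σ : V → A`: tuples
`(z_x)_{x ∈ I}` (encoded as functions vanishing off `I`) with
`z_x ≡ z_y mod σ(α)` for each edge `x —α— y` of `I`. -/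
def secAlg (G : MomentGraph k V) (A : Type) [CommRing A] (σ : V → A)
    (I : Set G.Vertex) : Submodule A (G.Vertex → A) where
  carrier := {z | (∀ x ∉ I, z x = 0) ∧ ∀ e, G.src e ∈ I → G.tgt e ∈ I →
      z (G.src e) - z (G.tgt e) ∈ Ideal.span {σ (G.label e)}}
  add_mem' := by
    intro a b ha hb
    refine ⟨fun x hx => ?_, fun e hs ht => ?_⟩
    · simp [ha.1 x hx, hb.1 x hx]
    · have h : (a + b) (G.src e) - (a + b) (G.tgt e)
          = (a (G.src e) - a (G.tgt e)) + (b (G.src e) - b (G.tgt e)) := by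
        simp only [Pi.add_apply]; ring
      rw [h]
      exact (Ideal.span {σ (G.label e)}).add_mem (ha.2 e hs ht) (hb.2 e hs ht)
  zero_mem' := by
    refine ⟨fun x _ => rfl, fun e _ _ => ?_⟩
    simp
  smul_mem' := by
    intro c a ha
    refine ⟨fun x hx => by simp [ha.1 x hx], fun e hs ht => ?_⟩
    have h : (c • a) (G.src e) - (c • a) (G.tgt e)
        = c * (a (G.src e) - a (G.tgt e)) := by
      simp only [Pi.smul_apply, smul_eq_mul]; ring
    rw [h]
    exact Ideal.mul_mem_left _ c (ha.2 e hs ht)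

/-- The structure algebra `Z(G)` of `G` with coefficients in `S` (via `ι`). -/
def structAlg (G : MomentGraph k V) (S : Type) [CommRing S] (σ : V → S) :
    Submodule S (G.Vertex → S) := secAlg G S σ Set.univ

/-- Restriction of tuples to a subgraph `I` (extension by zero off `I`). -/
noncomputable def restrictTo {A : Type} [CommRing A] {X : Type} (I : Set X) :
    (X → A) →ₗ[A] (X → A) where
  toFun z := I.indicator z
  map_add' a b := by
    funext x
    classical
    by_cases hx : x ∈ I <;> simp [Set.indicator, hx]
  map_smul' c a := by
    funext x
    classical
    by_cases hx : x ∈ I <;> simp [Set.indicator, hx]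

/-- `Z(G)^I`: the image of the restriction map `Z(G) → Z(I)`. -/
noncomputable def structAlgRes (G : MomentGraph k V) (S : Type) [CommRing S]
    (σ : V → S) (I : Set G.Vertex) : Submodule S (G.Vertex → S) :=
  Submodule.map (restrictTo I) (structAlg G S σ)

/-- The structure algebra `Z = Z(G)` as a subalgebra of `∏_{x} S` (pointwise
operations). -/
def structSubalg (G : MomentGraph k V) (S : Type) [CommRing S] (σ : V → S) :
    Subalgebra S (G.Vertex → S) where
  carrier := {z | ∀ e, z (G.src e) - z (G.tgt e) ∈ Ideal.span {σ (G.label e)}}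
  add_mem' := by
    intro a b ha hb e
    have h : (a + b) (G.src e) - (a + b) (G.tgt e)
        = (a (G.src e) - a (G.tgt e)) + (b (G.src e) - b (G.tgt e)) := by
      simp only [Pi.add_apply]; ring
    rw [h]; exact (Ideal.span _).add_mem (ha e) (hb e)
  mul_mem' := by
    intro a b ha hb e
    have h : (a * b) (G.src e) - (a * b) (G.tgt e)
        = a (G.src e) * (b (G.src e) - b (G.tgt e))
          + b (G.tgt e) * (a (G.src e) - a (G.tgt e)) := by
      simp only [Pi.mul_apply]; ring
    rw [h]
    exact (Ideal.span _).add_mem (Ideal.mul_mem_left _ _ (hb e))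
      (Ideal.mul_mem_left _ _ (ha e))
  algebraMap_mem' := by
    intro c e
    simp
  one_mem' := by
    intro e; simp
  zero_mem' := by
    intro e; simp

/-- Quasi-finiteness of a moment graph `G`: for every `γ ∈ V` (with `S·γ`
prime) and every finite subgraph `I`, the natural map
`Z(G)^I ⊗_S S_γ → Z_γ(I)` is a bijection. -/
def QuasiFinite {S : Type} [CommRing S] [Algebra k S] (ι : V →ₗ[k] S)
    (G : MomentGraph k V) : Prop :=
  ∀ (γ : V), γ ≠ 0 → ∀ (hp : (Ideal.span {ι γ}).IsPrime)
    (I : Set G.Vertex), I.Finite →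
    letI := hp
    ∃ f : (structAlgRes G S ι I) ⊗[S] (Localization (Ideal.span {ι γ}).primeCompl)
        →ₗ[S] (G.Vertex → Localization (Ideal.span {ι γ}).primeCompl),
      (∀ (m : structAlgRes G S ι I)
          (s : Localization (Ideal.span {ι γ}).primeCompl),
        f (m ⊗ₜ s) = fun x => s * algebraMap S _ (m.val x))
      ∧ Function.Injective f
      ∧ LinearMap.range f = Submodule.restrictScalars S
          (secAlg G (Localization (Ideal.span {ι γ}).primeCompl)
            (fun v => algebraMap S _ (ι v)) I)

section CoordFramework

open scoped Classical

/-- Projection of a tuple onto the coordinates in `I` (zero off `I`). -/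
noncomputable def projTo {k V : Type} [Field k] [AddCommGroup V] [Module k V]
    {S : Type} [CommRing S] (G : MomentGraph k V) (W : G.Vertex → Type)
    [∀ x, AddCommGroup (W x)] [∀ x, Module S (W x)] (I : Set G.Vertex) :
    (∀ x, W x) →ₗ[S] (∀ x, W x) where
  toFun m x := if x ∈ I then m x else 0
  map_add' a b := by
    funext x
    by_cases hx : x ∈ I <;> simp [hx]
  map_smul' c a := by
    funext x
    by_cases hx : x ∈ I <;> simp [hx]

/-- `M` (a submodule of `∏_x M_Q^x`) is an object of `Z-mod^f`, coordinatized
via its canonical decomposition: it is stable under the coordinatewise action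
of the structure algebra `Z`, finitely generated over `S`, and has finite
support. -/
def IsCoordModF {k V : Type} [Field k] [AddCommGroup V] [Module k V]
    {S : Type} [CommRing S] [Algebra k S] (G : MomentGraph k V)
    (Q : Type) [CommRing Q] [Algebra S Q] (W : G.Vertex → Type)
    [∀ x, AddCommGroup (W x)] [∀ x, Module Q (W x)] [∀ x, Module S (W x)]
    (ι : V →ₗ[k] S) (M : Submodule S (∀ x, W x)) : Prop :=
  (∀ z : G.Vertex → S, z ∈ structSubalg G S ι → ∀ m ∈ M,
      (fun x => algebraMap S Q (z x) • m x) ∈ M)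
  ∧ Module.Finite S M
  ∧ {x : G.Vertex | ∃ m ∈ M, m x ≠ 0}.Finite

/-- `M^J`: the projection of `M` onto the coordinates in `J`. -/
noncomputable def projMod {k V : Type} [Field k] [AddCommGroup V] [Module k V]
    {S : Type} [CommRing S] (G : MomentGraph k V) (W : G.Vertex → Type)
    [∀ x, AddCommGroup (W x)] [∀ x, Module S (W x)]
    (M : Submodule S (∀ x, W x)) (J : Set G.Vertex) :
    Submodule S (∀ x, W x) :=
  Submodule.map (projTo G W J) M

/-- The stalk `M^x`. -/
noncomputable def stalkMod {k V : Type} [Field k] [AddCommGroup V] [Module k V]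
    {S : Type} [CommRing S] (G : MomentGraph k V) (W : G.Vertex → Type)
    [∀ x, AddCommGroup (W x)] [∀ x, Module S (W x)]
    (M : Submodule S (∀ x, W x)) (x : G.Vertex) :
    Submodule S (∀ y, W y) :=
  projMod G W M {x}

/-- `M(E) = Z(E)·M^{x,y}` for an edge `E : x —α— y`. -/
noncomputable def edgeMod {k V : Type} [Field k] [AddCommGroup V] [Module k V]
    {S : Type} [CommRing S] [Algebra k S] (G : MomentGraph k V)
    (Q : Type) [CommRing Q] [Algebra S Q] (W : G.Vertex → Type)
    [∀ x, AddCommGroup (W x)] [∀ x, Module Q (W x)] [∀ x, Module S (W x)]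
    (ι : V →ₗ[k] S) (M : Submodule S (∀ x, W x)) (e : G.Edge) :
    Submodule S (∀ x, W x) :=
  Submodule.span S
    {p | ∃ z : S × S, z.1 - z.2 ∈ Ideal.span {ι (G.label e)} ∧
      ∃ m ∈ projMod G W M {G.src e, G.tgt e},
        p = fun x => algebraMap S Q (if x = G.src e then z.1 else z.2) • m x}

/-- Sign twist at the vertex `y` (used to form pushouts). -/
noncomputable def twistAt {k V : Type} [Field k] [AddCommGroup V] [Module k V]
    {S : Type} [CommRing S] (G : MomentGraph k V) (W : G.Vertex → Type)
    [∀ x, AddCommGroup (W x)] [∀ x, Module S (W x)] (y : G.Vertex) :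
    (∀ x, W x) →ₗ[S] (∀ x, W x) where
  toFun m x := if x = y then -m x else m x
  map_add' a b := by
    funext x
    by_cases hx : x = y <;> simp [hx] <;> abel
  map_smul' c a := by
    funext x
    by_cases hx : x = y <;> simp [hx]

/-- `M^x ⊕ M^y` for an edge `E : x — y` (internal sum of the stalks). -/
noncomputable def pairMod {k V : Type} [Field k] [AddCommGroup V] [Module k V]
    {S : Type} [CommRing S] (G : MomentGraph k V) (W : G.Vertex → Type)
    [∀ x, AddCommGroup (W x)] [∀ x, Module S (W x)]
    (M : Submodule S (∀ x, W x)) (e : G.Edge) :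
    Submodule S (∀ x, W x) :=
  stalkMod G W M (G.src e) ⊔ stalkMod G W M (G.tgt e)

/-- The submodule of `M^x ⊕ M^y` one divides by to obtain the pushout
`L(M)^E` of `M^x ← M(E) → M^y`. -/
noncomputable def pushKer {k V : Type} [Field k] [AddCommGroup V] [Module k V]
    {S : Type} [CommRing S] [Algebra k S] (G : MomentGraph k V)
    (Q : Type) [CommRing Q] [Algebra S Q] (W : G.Vertex → Type)
    [∀ x, AddCommGroup (W x)] [∀ x, Module Q (W x)] [∀ x, Module S (W x)]
    (ι : V →ₗ[k] S) (M : Submodule S (∀ x, W x)) (e : G.Edge) :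
    Submodule S (pairMod G W M e) :=
  Submodule.comap (pairMod G W M e).subtype
    (Submodule.map (twistAt G W (G.tgt e)) (edgeMod G Q W ι M e))

/-- The sections `Γ(L(M))` of the localized sheaf, described by local relations:
tuples `(m_x)` with `m_x ∈ M^x` for all `x` and `(m_x, m_y) ∈ M(E)` for all
edges `E : x — y`. -/
noncomputable def locSections {k V : Type} [Field k] [AddCommGroup V] [Module k V]
    {S : Type} [CommRing S] [Algebra k S] (G : MomentGraph k V)
    (Q : Type) [CommRing Q] [Algebra S Q] (W : G.Vertex → Type)
    [∀ x, AddCommGroup (W x)] [∀ x, Module Q (W x)] [∀ x, Module S (W x)]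
    (ι : V →ₗ[k] S) (M : Submodule S (∀ x, W x)) :
    Set (∀ x, W x) :=
  {m | (∀ x, projTo (S := S) G W {x} m ∈ stalkMod G W M x)
    ∧ ∀ e : G.Edge,
        projTo (S := S) G W {G.src e, G.tgt e} m ∈ edgeMod G Q W ι M e}

/-- `M` is determined by local relations, i.e. the unit `M → Γ(L(M))` is an
isomorphism. -/
def DetByLocal {k V : Type} [Field k] [AddCommGroup V] [Module k V]
    {S : Type} [CommRing S] [Algebra k S] (G : MomentGraph k V)
    (Q : Type) [CommRing Q] [Algebra S Q] (W : G.Vertex → Type)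
    [∀ x, AddCommGroup (W x)] [∀ x, Module Q (W x)] [∀ x, Module S (W x)]
    (ι : V →ₗ[k] S) (M : Submodule S (∀ x, W x)) : Prop :=
  (M : Set (∀ x, W x)) = locSections G Q W ι M

/-- Open (downwardly closed) subgraphs for the Alexandrov topology. -/
def IsOpenSub {k V : Type} [Field k] [AddCommGroup V] [Module k V]
    (G : MomentGraph k V) (I : Set G.Vertex) : Prop :=
  ∀ x y, G.le x y → y ∈ I → x ∈ I

/-- `M` is flabby: `M^I` is determined by local relations for every open `I`. -/
def Flabby {k V : Type} [Field k] [AddCommGroup V] [Module k V]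
    {S : Type} [CommRing S] [Algebra k S] (G : MomentGraph k V)
    (Q : Type) [CommRing Q] [Algebra S Q] (W : G.Vertex → Type)
    [∀ x, AddCommGroup (W x)] [∀ x, Module Q (W x)] [∀ x, Module S (W x)]
    (ι : V →ₗ[k] S) (M : Submodule S (∀ x, W x)) : Prop :=
  ∀ I : Set G.Vertex, IsOpenSub G I → DetByLocal G Q W ι (projMod G W M I)

/-- Tuples supported at the single vertex `x`. -/
def vertexOnly {k V : Type} [Field k] [AddCommGroup V] [Module k V]
    {S : Type} [CommRing S] (G : MomentGraph k V) (W : G.Vertex → Type)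
    [∀ x, AddCommGroup (W x)] [∀ x, Module S (W x)] (x : G.Vertex) :
    Submodule S (∀ y, W y) where
  carrier := {m | ∀ y, y ≠ x → m y = 0}
  add_mem' := by
    intro a b ha hb y hy
    simp [ha y hy, hb y hy]
  zero_mem' := fun y _ => rfl
  smul_mem' := by
    intro c a ha y hy
    simp [ha y hy]

/-- `M^{[x]} = ker(M^{≤x} → M^{<x})`: elements of `M^{≤x}` supported on `{x}`. -/
noncomputable def grKernel {k V : Type} [Field k] [AddCommGroup V] [Module k V]
    {S : Type} [CommRing S] (G : MomentGraph k V) (W : G.Vertex → Type)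
    [∀ x, AddCommGroup (W x)] [∀ x, Module S (W x)]
    (M : Submodule S (∀ x, W x)) (x : G.Vertex) :
    Submodule S (∀ y, W y) :=
  projMod G W M {y | G.le y x} ⊓ vertexOnly G W x

end CoordFramework


/-- A sheaf on the moment graph `G` (labels mapped into `S` via `σ`):
`S`-modules on vertices and edges, with `σ(l(E))·M^E = 0`, and restriction
maps from the stalks at the endpoints of each edge. -/
structure GSheaf {k V : Type} [Field k] [AddCommGroup V] [Module k V]
    {S : Type} [CommRing S] (G : MomentGraph k V) (σ : V → S) where
  Mv : G.Vertex → ModuleCat S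
  Me : G.Edge → ModuleCat S
  ρs : ∀ e, Mv (G.src e) ⟶ Me e
  ρt : ∀ e, Mv (G.tgt e) ⟶ Me e
  killed : ∀ e (u : Me e), σ (G.label e) • u = 0

/-- The space of sections of a sheaf over a subgraph `I` (tuples encoded as
functions vanishing off `I`). -/
def sheafSec {k V : Type} [Field k] [AddCommGroup V] [Module k V]
    {S : Type} [CommRing S] {G : MomentGraph k V} {σ : V → S}
    (F : GSheaf G σ) (I : Set G.Vertex) : Submodule S (∀ x, F.Mv x) where
  carrier := {m | (∀ x ∉ I, m x = 0) ∧ ∀ e, G.src e ∈ I → G.tgt e ∈ I →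
      F.ρs e (m (G.src e)) = F.ρt e (m (G.tgt e))}
  add_mem' := by
    intro a b ha hb
    refine ⟨fun x hx => ?_, fun e hs ht => ?_⟩
    · show a x + b x = 0
      rw [ha.1 x hx, hb.1 x hx, add_zero]
    · show F.ρs e (a (G.src e) + b (G.src e)) = F.ρt e (a (G.tgt e) + b (G.tgt e))
      rw [map_add, map_add, ha.2 e hs ht, hb.2 e hs ht]
  zero_mem' := ⟨fun x _ => rfl, fun e _ _ => by
    show F.ρs e 0 = F.ρt e 0
    rw [map_zero, map_zero]⟩
  smul_mem' := by
    intro c a ha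
    refine ⟨fun x hx => ?_, fun e hs ht => ?_⟩
    · show c • a x = 0
      rw [ha.1 x hx, smul_zero]
    · show F.ρs e (c • a (G.src e)) = F.ρt e (c • a (G.tgt e))
      rw [map_smul, map_smul, ha.2 e hs ht]

/-- `F` belongs to `SH(G)`: finite support, with finitely generated
torsion-free stalks. -/
def IsSHObj {k V : Type} [Field k] [AddCommGroup V] [Module k V]
    {S : Type} [CommRing S] {G : MomentGraph k V} {σ : V → S}
    (F : GSheaf G σ) : Prop :=
  {x : G.Vertex | ∃ m : F.Mv x, m ≠ 0}.Finite
  ∧ (∀ x, Module.Finite S (F.Mv x))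
  ∧ ∀ (x : G.Vertex) (s : S) (m : F.Mv x), s • m = 0 → s = 0 ∨ m = 0

/-- A morphism of sheaves on `G`. -/
structure GSheafHom {k V : Type} [Field k] [AddCommGroup V] [Module k V]
    {S : Type} [CommRing S] {G : MomentGraph k V} {σ : V → S}
    (F F' : GSheaf G σ) where
  fv : ∀ x, F.Mv x ⟶ F'.Mv x
  fe : ∀ e, F.Me e ⟶ F'.Me e
  comm_s : ∀ e (m : F.Mv (G.src e)),
    fe e (F.ρs e m) = F'.ρs e (fv (G.src e) m)
  comm_t : ∀ e (m : F.Mv (G.tgt e)),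
    fe e (F.ρt e m) = F'.ρt e (fv (G.tgt e) m)

/-- `F` is generated by global sections (the counit `L(Γ(F)) → F` is an
isomorphism): every stalk element is the component of a global section, the
edge modules are generated by the images of the stalks, and every local
relation comes from a global section. -/
def IsGenByGlobal {k V : Type} [Field k] [AddCommGroup V] [Module k V]
    {S : Type} [CommRing S] {G : MomentGraph k V} {σ : V → S}
    (F : GSheaf G σ) : Prop :=
  (∀ (x : G.Vertex) (m : F.Mv x), ∃ s ∈ sheafSec F Set.univ, s x = m)
  ∧ (∀ (e : G.Edge) (u : F.Me e), ∃ a b, F.ρs e a + F.ρt e b = u)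
  ∧ ∀ (e : G.Edge) (a : F.Mv (G.src e)) (b : F.Mv (G.tgt e)),
      F.ρs e a = F.ρt e b →
      ∃ s ∈ sheafSec F Set.univ, s (G.src e) = a ∧ s (G.tgt e) = b

/-- `F` is flabby for the Alexandrov topology: sections over open subgraphs
extend to global sections. -/
def IsFlabbySheaf {k V : Type} [Field k] [AddCommGroup V] [Module k V]
    {S : Type} [CommRing S] {G : MomentGraph k V} {σ : V → S}
    (F : GSheaf G σ) : Prop :=
  ∀ I : Set G.Vertex, IsOpenSub G I →
    ∀ s ∈ sheafSec F I, ∃ t ∈ sheafSec F Set.univ, ∀ x ∈ I, t x = s x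

/-- `F` has reflexive spaces of sections over all open subgraphs. -/
def IsRefSheaf {k V : Type} [Field k] [AddCommGroup V] [Module k V]
    {S : Type} [CommRing S] {G : MomentGraph k V} {σ : V → S}
    (F : GSheaf G σ) : Prop :=
  ∀ I : Set G.Vertex, IsOpenSub G I →
    Function.Bijective (Module.Dual.eval S (sheafSec F I))

/-- Objects of the exact category `C^{ref}`: sheaves in `SH(G)` generated by
global sections, flabby, with reflexive sections. -/
def IsCref {k V : Type} [Field k] [AddCommGroup V] [Module k V]
    {S : Type} [CommRing S] {G : MomentGraph k V} {σ : V → S}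
    (F : GSheaf G σ) : Prop :=
  IsSHObj F ∧ IsGenByGlobal F ∧ IsFlabbySheaf F ∧ IsRefSheaf F

/-- The sequence `A → B → C` of sheaves is short exact: the induced sequence of
sections over every open subgraph is short exact. -/
def SheafSES {k V : Type} [Field k] [AddCommGroup V] [Module k V]
    {S : Type} [CommRing S] {G : MomentGraph k V} {σ : V → S}
    {A B C : GSheaf G σ} (f : GSheafHom A B) (g : GSheafHom B C) : Prop :=
  ∀ I : Set G.Vertex, IsOpenSub G I →
    (∀ s ∈ sheafSec A I, (fun x => f.fv x (s x)) = (0 : ∀ x, B.Mv x) → s = 0)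
    ∧ (∀ s ∈ sheafSec A I,
        (fun x => g.fv x (f.fv x (s x))) = (0 : ∀ x, C.Mv x))
    ∧ (∀ t ∈ sheafSec B I, (fun x => g.fv x (t x)) = (0 : ∀ x, C.Mv x) →
        ∃ s ∈ sheafSec A I, (fun x => f.fv x (s x)) = t)
    ∧ (∀ u ∈ sheafSec C I,
        ∃ t ∈ sheafSec B I, (fun x => g.fv x (t x)) = u)

/-- `P` is a projective object of the exact category `C^{ref}`: morphisms to
the target of an admissible epimorphism in `C^{ref}` lift. -/
def IsProjCref {k V : Type} [Field k] [AddCommGroup V] [Module k V]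
    {S : Type} [CommRing S] {G : MomentGraph k V} {σ : V → S}
    (P : GSheaf G σ) : Prop :=
  ∀ (B C : GSheaf G σ), IsCref B → IsCref C → ∀ g : GSheafHom B C,
    (∃ A : GSheaf G σ, IsCref A ∧ ∃ f : GSheafHom A B, SheafSES f g) →
    ∀ h : GSheafHom P C, ∃ l : GSheafHom P B,
      (∀ x m, g.fv x (l.fv x m) = h.fv x m)
      ∧ ∀ e u, g.fe e (l.fe e u) = h.fe e u

/-- A morphism of sheaves is an isomorphism. -/
def IsIsoHom {k V : Type} [Field k] [AddCommGroup V] [Module k V]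
    {S : Type} [CommRing S] {G : MomentGraph k V} {σ : V → S}
    {A B : GSheaf G σ} (f : GSheafHom A B) : Prop :=
  (∀ x, Function.Bijective (f.fv x)) ∧ ∀ e, Function.Bijective (f.fe e)

/-- A sheaf is indecomposable: it is nonzero and every idempotent endomorphism
is the identity or zero. -/
def IsIndecSheaf {k V : Type} [Field k] [AddCommGroup V] [Module k V]
    {S : Type} [CommRing S] {G : MomentGraph k V} {σ : V → S}
    (P : GSheaf G σ) : Prop :=
  (∃ (x : G.Vertex) (m : P.Mv x), m ≠ 0)
  ∧ ∀ f : GSheafHom P P, (∀ x m, f.fv x (f.fv x m) = f.fv x m) →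
      (∀ e u, f.fe e (f.fe e u) = f.fe e u) →
      ((∀ x m, f.fv x m = m) ∧ ∀ e u, f.fe e u = u)
      ∨ ((∀ x (m : P.Mv x), f.fv x m = 0) ∧ ∀ e (u : P.Me e), f.fe e u = 0)

section MyAux

variable {k V S : Type} [Field k] [AddCommGroup V] [Module k V] [CommRing S]
  {G : MomentGraph k V} {σ : V → S} {F : GSheaf G σ}

/-- If the stalk at the target of `e` is trivial, then `ρs e` vanishes
(because every stalk element extends to a global section). -/
lemma my_triv_rhos (hgen : IsGenByGlobal F) (e : G.Edge)
    (htriv : ∀ b : F.Mv (G.tgt e), b = 0) (a : F.Mv (G.src e)) :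
    F.ρs e a = 0 := by
  obtain ⟨t, ht, hta⟩ := hgen.1 (G.src e) a
  have h := ht.2 e (Set.mem_univ _) (Set.mem_univ _)
  rw [hta] at h
  rw [h, htriv (t (G.tgt e)), map_zero]

/-- If the stalk at the source of `e` is trivial, then `ρt e` vanishes. -/
lemma my_triv_rhot (hgen : IsGenByGlobal F) (e : G.Edge)
    (htriv : ∀ a : F.Mv (G.src e), a = 0) (b : F.Mv (G.tgt e)) :
    F.ρt e b = 0 := by
  obtain ⟨t, ht, htb⟩ := hgen.1 (G.tgt e) b
  have h := ht.2 e (Set.mem_univ _) (Set.mem_univ _)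
  rw [htb] at h
  rw [← h, htriv (t (G.src e)), map_zero]

/-- If one of the endpoints of `e` has a trivial stalk, the compatibility
condition along `e` holds automatically. -/
lemma my_edge_auto (hgen : IsGenByGlobal F) (e : G.Edge)
    (htriv : (∀ a : F.Mv (G.src e), a = 0) ∨ (∀ b : F.Mv (G.tgt e), b = 0))
    (a : F.Mv (G.src e)) (b : F.Mv (G.tgt e)) :
    F.ρs e a = F.ρt e b := by
  rcases htriv with h | h
  · rw [h a, map_zero, my_triv_rhot hgen e h b]
  · rw [my_triv_rhos hgen e h a, h b, map_zero]

/-- A finite nonempty set of vertices has a minimal element. -/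
lemma my_exists_min (T : Set G.Vertex) (hT : T.Finite) (hne : T.Nonempty) :
    ∃ x ∈ T, ∀ y ∈ T, G.le y x → y = x := by
  letI : PartialOrder G.Vertex :=
    { le := G.le
      le_refl := G.le_refl
      le_trans := G.le_trans
      le_antisymm := G.le_antisymm }
  obtain ⟨x, hx, hmin⟩ := Set.Finite.exists_minimal hT hne
  exact ⟨x, hx, fun y hy hyx => G.le_antisymm _ _ hyx (hmin hy hyx)⟩

/-- Base case of the extension argument: if the support is contained in the
open set `I`, a section over `I` extends by zero to a global section. -/
lemma my_extend_base (hgen : IsGenByGlobal F) {I : Set G.Vertex}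
    (hsub : {x : G.Vertex | ∃ m : F.Mv x, m ≠ 0} ⊆ I)
    (s : ∀ x, F.Mv x) (hs : s ∈ sheafSec F I) :
    ∃ t ∈ sheafSec F Set.univ, ∀ x ∈ I, t x = s x := by
  classical
  have htriv : ∀ x ∉ I, ∀ m : F.Mv x, m = 0 := by
    intro x hx m
    by_contra hm
    exact hx (hsub ⟨m, hm⟩)
  refine ⟨fun y => if y ∈ I then s y else 0, ⟨fun x hx => absurd (Set.mem_univ x) hx,
    fun e _ _ => ?_⟩, fun x hx => if_pos hx⟩
  by_cases hsrc : G.src e ∈ I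
  · by_cases htgt : G.tgt e ∈ I
    · simp only [if_pos hsrc, if_pos htgt]
      exact hs.2 e hsrc htgt
    · exact my_edge_auto hgen e (Or.inr (htriv _ htgt)) _ _
  · exact my_edge_auto hgen e (Or.inl (htriv _ hsrc)) _ _

/-- The key extension lemma, by induction on the number of support vertices
outside `I`: condition (2) implies extendability of sections over any open
subgraph. -/
lemma my_extend (hSH : IsSHObj F) (hgen : IsGenByGlobal F)
    (hx2 : ∀ x : G.Vertex, ∀ s ∈ sheafSec F {y | G.le y x ∧ y ≠ x},
        ∃ t ∈ sheafSec F {y | G.le y x}, ∀ y, G.le y x → y ≠ x → t y = s y) :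
    ∀ (n : ℕ) (I : Set G.Vertex), IsOpenSub G I →
      ({x : G.Vertex | ∃ m : F.Mv x, m ≠ 0} \ I).ncard ≤ n →
      ∀ s ∈ sheafSec F I, ∃ t ∈ sheafSec F Set.univ, ∀ x ∈ I, t x = s x := by
  classical
  set Ω : Set G.Vertex := {x : G.Vertex | ∃ m : F.Mv x, m ≠ 0} with hΩ
  have hΩfin : Ω.Finite := hSH.1
  intro n
  induction n with
  | zero =>
    intro I hI hcard s hs
    have hempty : Ω \ I = ∅ := by
      have h0 : (Ω \ I).ncard = 0 := Nat.le_zero.mp hcard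
      exact (Set.ncard_eq_zero (hΩfin.diff (t := I))).mp h0
    exact my_extend_base hgen (fun x hx => by
      by_contra hxI
      exact (Set.eq_empty_iff_forall_notMem.mp hempty x) ⟨hx, hxI⟩) s hs
  | succ n ih =>
    intro I hI hcard s hs
    by_cases hsub : Ω ⊆ I
    · exact my_extend_base hgen hsub s hs
    · -- pick a minimal vertex of `Ω \ I`
      obtain ⟨x0, hx0mem, hxI0⟩ := Set.not_subset.mp hsub
      obtain ⟨x, hxmem, hxmin⟩ := my_exists_min (Ω \ I) (hΩfin.diff (t := I))
        ⟨x0, hx0mem, hxI0⟩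
      -- vertices strictly below `x` outside `I` have trivial stalks
      have hbelow : ∀ y, G.le y x → y ≠ x → y ∉ I → ∀ m : F.Mv y, m = 0 := by
        intro y hyx hyne hyI m
        by_contra hm
        exact hyne (hxmin y ⟨⟨m, hm⟩, hyI⟩ hyx)
      -- the restriction of `s` to `{< x}`
      set s'' : ∀ y, F.Mv y :=
        fun y => if G.le y x ∧ y ≠ x ∧ y ∈ I then s y else 0 with hs''def
      have hs'' : s'' ∈ sheafSec F {y | G.le y x ∧ y ≠ x} := by
        constructor
        · intro y hy
          rw [hs''def]
          simp only
          rw [if_neg (fun h => hy ⟨h.1, h.2.1⟩)]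
        · intro e hsrc htgt
          by_cases hsI : G.src e ∈ I
          · by_cases htI : G.tgt e ∈ I
            · rw [hs''def]
              simp only
              rw [if_pos ⟨hsrc.1, hsrc.2, hsI⟩, if_pos ⟨htgt.1, htgt.2, htI⟩]
              exact hs.2 e hsI htI
            · exact my_edge_auto hgen e
                (Or.inr (hbelow _ htgt.1 htgt.2 htI)) _ _
          · exact my_edge_auto hgen e
              (Or.inl (hbelow _ hsrc.1 hsrc.2 hsI)) _ _
      obtain ⟨t₁, ht₁, hagr₁⟩ := hx2 x s'' hs''
      -- the extended section over `I' = I ∪ {≤ x}`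
      set I' : Set G.Vertex := I ∪ {y | G.le y x} with hI'def
      have hI' : IsOpenSub G I' := by
        intro a b hab hb
        rcases hb with hb | hb
        · exact Or.inl (hI a b hab hb)
        · exact Or.inr (G.le_trans a b x hab hb)
      set t' : ∀ y, F.Mv y := fun y => if y ∈ I then s y else t₁ y with ht'def
      have ht' : t' ∈ sheafSec F I' := by
        constructor
        · intro y hy
          have hyI : y ∉ I := fun h => hy (Or.inl h)
          have hyx : y ∉ {y | G.le y x} := fun h => hy (Or.inr h)
          rw [ht'def]
          simp only
          rw [if_neg hyI]
          exact ht₁.1 y hyx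
        · intro e hsrc htgt
          by_cases hsI : G.src e ∈ I
          · by_cases htI : G.tgt e ∈ I
            · rw [ht'def]; simp only
              rw [if_pos hsI, if_pos htI]
              exact hs.2 e hsI htI
            · have htle : G.le (G.tgt e) x := htgt.resolve_left htI
              by_cases htx : G.tgt e = x
              · -- edge into `x`: use the section `t₁` over `{≤ x}`
                have hsle : G.le (G.src e) x :=
                  G.le_trans _ _ _ (G.src_le_tgt e) htle
                have hsnex : G.src e ≠ x := fun h => G.src_ne_tgt e (h.trans htx.symm)
                have h := ht₁.2 e hsle htle
                have hts : t₁ (G.src e) = s (G.src e) := by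
                  rw [hagr₁ (G.src e) hsle hsnex, hs''def]
                  simp only
                  rw [if_pos ⟨hsle, hsnex, hsI⟩]
                rw [hts] at h
                rw [ht'def]; simp only
                rw [if_pos hsI, if_neg htI]
                exact h
              · exact my_edge_auto hgen e
                  (Or.inr (hbelow _ htle htx htI)) _ _
          · have hsle : G.le (G.src e) x := hsrc.resolve_left hsI
            have htI : G.tgt e ∉ I := fun h => hsI (hI _ _ (G.src_le_tgt e) h)
            have htle : G.le (G.tgt e) x := htgt.resolve_left htI
            rw [ht'def]; simp only
            rw [if_neg hsI, if_neg htI]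
            exact ht₁.2 e hsle htle
      -- the number of support vertices outside `I'` has dropped
      have hcard' : (Ω \ I').ncard ≤ n := by
        have hss : Ω \ I' ⊂ Ω \ I := by
          constructor
          · intro y hy
            exact ⟨hy.1, fun h => hy.2 (Or.inl h)⟩
          · intro hcon
            have := hcon hxmem
            exact this.2 (Or.inr (G.le_refl x))
        have := Set.ncard_lt_ncard hss (hΩfin.diff (t := I))
        omega
      obtain ⟨t, ht, hagr⟩ := ih I' hI' hcard' t' ht'
      refine ⟨t, ht, fun y hy => ?_⟩
      rw [hagr y (Or.inl hy), ht'def]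
      simp only
      rw [if_pos hy]

end MyAux

/-- Let `G` be a quasi-finite moment graph and `F` a sheaf on `G`
generated by global sections.  Then the following are equivalent:
(1) for every open subgraph `I` the restriction `F(G) → F(I)` is surjective;
(2) for every vertex `x` the restriction `F({≤x}) → F({<x})` is surjective;
(3) for every vertex `x` the map `F^x → F^{δx}` (the sum of the maps `ρ_{x,E}`
over edges ending at `x`) is surjective onto the image `F^{δx}` of `F({<x})`. -/
theorem flabby_tfae
    {k V S : Type} [Field k] [AddCommGroup V] [Module k V]
    [CommRing S] [IsDomain S] [Algebra k S] (ι : V →ₗ[k] S)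
    (hS : IsSymmAlg k V S ι)
    (G : MomentGraph k V) (hqf : QuasiFinite ι G)
    (F : GSheaf G (fun v => ι v)) (hSH : IsSHObj F)
    (hgen : IsGenByGlobal F) :
    ((∀ I : Set G.Vertex, IsOpenSub G I →
        ∀ s ∈ sheafSec F I, ∃ t ∈ sheafSec F Set.univ, ∀ x ∈ I, t x = s x)
      ↔ (∀ x : G.Vertex,
          ∀ s ∈ sheafSec F {y | G.le y x ∧ y ≠ x},
            ∃ t ∈ sheafSec F {y | G.le y x},
              ∀ y, G.le y x → y ≠ x → t y = s y))
    ∧ ((∀ x : G.Vertex,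
          ∀ s ∈ sheafSec F {y | G.le y x ∧ y ≠ x},
            ∃ t ∈ sheafSec F {y | G.le y x},
              ∀ y, G.le y x → y ≠ x → t y = s y)
      ↔ (∀ x : G.Vertex,
          ∀ s ∈ sheafSec F {y | G.le y x ∧ y ≠ x},
            ∃ m : F.Mv x, ∀ (e : G.Edge) (h : G.tgt e = x),
              F.ρt e (h.symm ▸ m) = F.ρs e (s (G.src e)))) := by
  classical
  constructor
  · constructor
    · -- (1) → (2)
      intro h1 x s hs
      have hopen : IsOpenSub G {y | G.le y x ∧ y ≠ x} := by
        intro a b hab hb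
        refine ⟨G.le_trans a b x hab hb.1, fun hax => hb.2 ?_⟩
        exact G.le_antisymm b x hb.1 (hax ▸ hab)
      obtain ⟨t, ht, hagr⟩ := h1 _ hopen s hs
      refine ⟨fun y => if G.le y x then t y else 0,
        ⟨fun y hy => if_neg hy, fun e hsrc htgt => ?_⟩, fun y hy hyx => ?_⟩
      · show F.ρs e (if G.le (G.src e) x then t (G.src e) else 0)
            = F.ρt e (if G.le (G.tgt e) x then t (G.tgt e) else 0)
        have hsrc' : G.le (G.src e) x := hsrc
        have htgt' : G.le (G.tgt e) x := htgt
        rw [if_pos hsrc', if_pos htgt']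
        exact ht.2 e (Set.mem_univ _) (Set.mem_univ _)
      · show (if G.le y x then t y else 0) = s y
        rw [if_pos hy]
        exact hagr y ⟨hy, hyx⟩
    · -- (2) → (1)
      intro h2 I hI s hs
      exact my_extend hSH hgen h2 _ I hI le_rfl s hs
  · constructor
    · -- (2) → (3)
      intro h2 x s hs
      obtain ⟨t, ht, hagr⟩ := h2 x s hs
      refine ⟨t x, fun e h => ?_⟩
      subst h
      have hsle : G.le (G.src e) (G.tgt e) := G.src_le_tgt e
      have h := ht.2 e hsle (G.le_refl _)
      have hts : t (G.src e) = s (G.src e) := hagr _ hsle (G.src_ne_tgt e)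
      rw [hts] at h
      exact h.symm
    · -- (3) → (2)
      intro h3 x s hs
      obtain ⟨m, hm⟩ := h3 x s hs
      refine ⟨fun y => if hy : y = x then hy.symm ▸ m else s y,
        ⟨fun y hy => ?_, fun e hsrc htgt => ?_⟩, fun y hy hyx => dif_neg hyx⟩
      · have hyx : y ≠ x := fun h => hy (h ▸ G.le_refl x)
        show (if hy' : y = x then hy'.symm ▸ m else s y) = 0
        rw [dif_neg hyx]
        exact hs.1 y (fun h => hy h.1)
      · show F.ρs e (if h : G.src e = x then h.symm ▸ m else s (G.src e))
            = F.ρt e (if h : G.tgt e = x then h.symm ▸ m else s (G.tgt e))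
        by_cases htx : G.tgt e = x
        · have hsnex : G.src e ≠ x := fun h => G.src_ne_tgt e (h.trans htx.symm)
          rw [dif_neg hsnex, dif_pos htx]
          exact (hm e htx).symm
        · have hsnex : G.src e ≠ x := by
            intro h
            exact htx (G.le_antisymm _ _ htgt (h ▸ G.src_le_tgt e))
          rw [dif_neg hsnex, dif_neg htx]
          exact hs.2 e ⟨hsrc, hsnex⟩ ⟨htgt, htx⟩
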